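/- Let T be a positive invertible element of a unital C*-algebra with m·1 ≤ T ≤ M·1 ≤ 1 for real numbers 0 < m ≤ M ≤ 1, and let λ ∈ [0,1]. Then (1-λ)T + λ·1 - T^{1-λ} ≤ D·1, where D = max over t ∈ [m, M] of λ(1-λ)(log t)². -/

import Mathlib

private lemma aux_exp (s : ℝ) (hs : 0 ≤ s) (a : ℝ) (ha : a ≤ 1) :
    Real.exp s * (a - s) ≤ a := by
  have h1 : s + 1 ≤ Real.exp s := Real.add_one_le_exp s
  have h2 : (-s) + 1 ≤ Real.exp (-s) := Real.add_one_le_exp (-s)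
  have h3 : Real.exp s * Real.exp (-s) = 1 := by rw [← Real.exp_add]; simp
  nlinarith [Real.exp_pos s, Real.exp_pos (-s)]

private lemma psi2 (l u : ℝ) (hl0 : 0 ≤ l) (hl1 : l ≤ 1) (hu : 0 ≤ u) :
    Real.exp u ≤ (1 - l) * (2 + u) * Real.exp u + l * Real.exp (l * u) := by
  have hs : 0 ≤ (1 - l) * u := mul_nonneg (by linarith) hu
  have hsplit : Real.exp u = Real.exp (l * u) * Real.exp ((1 - l) * u) := by
    rw [← Real.exp_add]; ring_nf
  have key := aux_exp ((1 - l) * u) hs (2 * l - 1) (by linarith)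
  have hE : (0:ℝ) < Real.exp (l * u) := Real.exp_pos _
  -- exp u * (2l - 1 - (1-l)u) ≤ exp (l u) * l
  have : Real.exp u * (2 * l - 1 - (1 - l) * u) ≤ Real.exp (l * u) * l := by
    rw [hsplit]
    calc Real.exp (l * u) * Real.exp ((1 - l) * u) * (2 * l - 1 - (1 - l) * u)
        = Real.exp (l * u) * (Real.exp ((1 - l) * u) * ((2 * l - 1) - (1 - l) * u)) := by ring
      _ ≤ Real.exp (l * u) * (2 * l - 1) := by
          exact mul_le_mul_of_nonneg_left key hE.le
      _ ≤ Real.exp (l * u) * l := by nlinarith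
  nlinarith [Real.exp_pos u]

private lemma nonneg_on_Ici (f f' : ℝ → ℝ) (hd : ∀ u, HasDerivAt f (f' u) u)
    (h0 : f 0 = 0) (hf' : ∀ u, 0 ≤ u → 0 ≤ f' u) : ∀ u, 0 ≤ u → 0 ≤ f u := by
  intro u hu
  have hmono : MonotoneOn f (Set.Ici 0) := by
    apply monotoneOn_of_deriv_nonneg (convex_Ici 0)
    · exact fun x _ => (hd x).continuousAt.continuousWithinAt
    · exact fun x _ => (hd x).differentiableAt.differentiableWithinAt
    · intro x hx
      rw [(hd x).deriv]
      exact hf' x (le_of_lt (by simpa using hx))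
  simpa [h0] using hmono Set.self_mem_Ici hu hu

private lemma psi_nonneg (l : ℝ) (hl0 : 0 ≤ l) (hl1 : l ≤ 1) :
    ∀ u, 0 ≤ u →
      0 ≤ l * (1 - l) * (u * (Real.exp u - 1)) + Real.exp (l * u) - l * Real.exp u - (1 - l) := by
  set c := l * (1 - l) with hc
  have hexp : ∀ u : ℝ, HasDerivAt (fun u => Real.exp (l * u)) (Real.exp (l * u) * l) u := by
    intro u
    simpa using ((hasDerivAt_id u).const_mul l).exp
  -- first: derivative level
  have h1 : ∀ u, 0 ≤ u →
      0 ≤ c * (Real.exp u - 1 + u * Real.exp u) + Real.exp (l * u) * l - l * Real.exp u := by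
    apply nonneg_on_Ici _
      (fun u => c * (Real.exp u + (Real.exp u + u * Real.exp u)) + Real.exp (l * u) * l * l
        - l * Real.exp u)
    · intro u
      have hA : HasDerivAt (fun u : ℝ => c * (Real.exp u - 1 + u * Real.exp u))
          (c * (Real.exp u + (Real.exp u + u * Real.exp u))) u := by
        have := ((Real.hasDerivAt_exp u).sub_const 1).add
          ((hasDerivAt_id u).mul (Real.hasDerivAt_exp u))
        simpa [mul_comm, add_comm] using (this.const_mul c)
      have hB : HasDerivAt (fun u : ℝ => Real.exp (l * u) * l) (Real.exp (l * u) * l * l) u :=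
        (hexp u).mul_const l
      have hC : HasDerivAt (fun u : ℝ => l * Real.exp u) (l * Real.exp u) u :=
        (Real.hasDerivAt_exp u).const_mul l
      exact (hA.add hB).sub hC
    · simp
    · intro u hu
      have hkey := mul_le_mul_of_nonneg_left (psi2 l u hl0 hl1 hu) hl0
      simp only [hc]
      nlinarith [hkey]
  -- second: function level
  apply nonneg_on_Ici _
    (fun u => c * (Real.exp u - 1 + u * Real.exp u) + Real.exp (l * u) * l - l * Real.exp u)
  · intro u
    have hA : HasDerivAt (fun u : ℝ => c * (u * (Real.exp u - 1)))
        (c * (Real.exp u - 1 + u * Real.exp u)) u := by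
      have := (hasDerivAt_id u).mul ((Real.hasDerivAt_exp u).sub_const 1)
      have h2 := this.const_mul c
      exact h2.congr_deriv (by simp only [id_eq]; ring)
    have hB := hexp u
    have hC : HasDerivAt (fun u : ℝ => l * Real.exp u) (l * Real.exp u) u :=
      (Real.hasDerivAt_exp u).const_mul l
    exact ((hA.add hB).sub hC).sub_const (1 - l)
  · simp
  · exact h1

/-- The key scalar inequality. -/
private lemma scalar_ineq (l x : ℝ) (hl0 : 0 ≤ l) (hl1 : l ≤ 1) (hx0 : 0 < x) (hx1 : x ≤ 1) :
    (1 - l) * x + l - x ^ (1 - l) ≤ l * (1 - l) * Real.log x ^ 2 := by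
  set u : ℝ := -Real.log x with hu
  have hu0 : 0 ≤ u := by
    simp only [hu, Left.nonneg_neg_iff]
    exact Real.log_nonpos hx0.le hx1
  have hxe : x = Real.exp (-u) := by rw [hu, neg_neg, Real.exp_log hx0]
  have hrpow : x ^ (1 - l) = Real.exp (-(1 - l) * u) := by
    rw [Real.rpow_def_of_pos hx0]
    congr 1
    rw [hu]; ring
  have hψ := psi_nonneg l hl0 hl1 u hu0
  have hum : 1 - Real.exp (-u) ≤ u := by
    have := Real.add_one_le_exp (-u)
    linarith
  have hEmu : (0:ℝ) < Real.exp (-u) := Real.exp_pos _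
  have hsplit : Real.exp (-(1 - l) * u) = Real.exp (l * u) * Real.exp (-u) := by
    rw [← Real.exp_add]; ring_nf
  -- multiply ψ ≥ 0 by exp (-u) > 0
  have key : (1 - l) * Real.exp (-u) + l - Real.exp (-(1 - l) * u)
      ≤ l * (1 - l) * (u * (1 - Real.exp (-u))) := by
    have h3 : Real.exp u * Real.exp (-u) = 1 := by rw [← Real.exp_add]; simp
    have expand : Real.exp (-u) *
        (l * (1 - l) * (u * (Real.exp u - 1)) + Real.exp (l * u) - l * Real.exp u - (1 - l))
        = l * (1 - l) * (u * (1 - Real.exp (-u))) + Real.exp (l * u) * Real.exp (-u)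
          - l * Real.exp u * Real.exp (-u) - (1 - l) * Real.exp (-u) := by
      linear_combination (l * (1 - l) * u) * h3
    have hmul := mul_nonneg hEmu.le hψ
    rw [expand] at hmul
    rw [hsplit]
    nlinarith [hmul, h3]
  have hc : 0 ≤ l * (1 - l) := mul_nonneg hl0 (by linarith)
  have : l * (1 - l) * (u * (1 - Real.exp (-u))) ≤ l * (1 - l) * (u * u) := by
    apply mul_le_mul_of_nonneg_left _ hc
    exact mul_le_mul_of_nonneg_left hum hu0
  have hlog : Real.log x ^ 2 = u * u := by rw [hu]; ring
  rw [hrpow, hlog, hxe]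
  linarith

open scoped NNReal

/-- Let `T` be a positive invertible element of a unital C*-algebra with
`m·1 ≤ T ≤ M·1 ≤ 1` for reals `0 < m ≤ M ≤ 1`, and let `λ ∈ [0,1]`. Then
`(1-λ)T + λ·1 - T^(1-λ) ≤ D·1`, where `D` is the maximum of
`t ↦ λ(1-λ)(log t)²` over `t ∈ [m, M]`. -/
theorem stmt_7 {A : Type*} [CStarAlgebra A] [PartialOrder A] [StarOrderedRing A]
    (T : A) (hT : 0 ≤ T) (hTunit : IsUnit T)
    (m M lam D : ℝ) (hm : 0 < m) (hmM : m ≤ M) (hM1 : M ≤ 1)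
    (hmT : m • (1 : A) ≤ T) (hTM : T ≤ M • (1 : A))
    (hlam : lam ∈ Set.Icc (0 : ℝ) 1)
    (hD : IsGreatest ((fun t : ℝ => lam * (1 - lam) * (Real.log t) ^ 2) '' Set.Icc m M) D) :
    (1 - lam) • T + lam • (1 : A) - T ^ (1 - lam) ≤ D • (1 : A) := by
  have hTsa : IsSelfAdjoint T := .of_nonneg hT
  have hub : ∀ x ∈ spectrum ℝ T, x ≤ M := by
    rw [← le_algebraMap_iff_spectrum_le]
    rwa [Algebra.algebraMap_eq_smul_one]
  have hlb : ∀ x ∈ spectrum ℝ T, m ≤ x := by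
    rw [← algebraMap_le_iff_le_spectrum]
    rwa [Algebra.algebraMap_eq_smul_one]
  -- continuity of the rpow part on the spectrum
  have hcont2 : ContinuousOn (fun x : ℝ => x ^ (1 - lam)) (spectrum ℝ T) := by
    intro x hx
    exact (Real.continuousAt_rpow_const x (1 - lam)
      (Or.inl (ne_of_gt (lt_of_lt_of_le hm (hlb x hx))))).continuousWithinAt
  have hcont1 : ContinuousOn (fun x : ℝ => (1 - lam) * x + lam) (spectrum ℝ T) :=
    (continuousOn_const.mul continuousOn_id).add continuousOn_const
  -- rewrite T ^ (1 - lam) as a real cfc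
  have hpow : T ^ (1 - lam) = cfc (fun x : ℝ => x ^ (1 - lam)) T := by
    rw [← CFC.rpow_eq_pow (a := T) (y := 1 - lam), CFC.rpow, cfc_nnreal_eq_real _ T hT]
    apply cfc_congr
    intro x hx
    have hx0 : 0 < x := lt_of_lt_of_le hm (hlb x hx)
    simp only [NNReal.coe_rpow, Real.coe_toNNReal x hx0.le]
  have hlin : cfc (fun x : ℝ => (1 - lam) * x + lam) T = (1 - lam) • T + lam • (1 : A) := by
    rw [cfc_add (R := ℝ) (a := T) ((1 - lam) * ·) (fun _ => lam), cfc_const_mul_id (1 - lam) T hTsa,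
      cfc_const lam T hTsa, Algebra.algebraMap_eq_smul_one]
  have main : (1 - lam) • T + lam • (1 : A) - T ^ (1 - lam)
      = cfc (fun x : ℝ => (1 - lam) * x + lam - x ^ (1 - lam)) T := by
    rw [cfc_sub (f := fun x : ℝ => (1 - lam) * x + lam) (g := fun x : ℝ => x ^ (1 - lam))
      (a := T) hcont1 hcont2, hpow, hlin]
  rw [main, ← Algebra.algebraMap_eq_smul_one,
    cfc_le_algebraMap_iff (fun x : ℝ => (1 - lam) * x + lam - x ^ (1 - lam)) D T (hcont1.sub hcont2)]
  intro x hx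
  have hx0 : 0 < x := lt_of_lt_of_le hm (hlb x hx)
  have hx1 : x ≤ 1 := le_trans (hub x hx) hM1
  have h1 := scalar_ineq lam x hlam.1 hlam.2 hx0 hx1
  have h2 : lam * (1 - lam) * Real.log x ^ 2 ≤ D := hD.2 ⟨x, ⟨hlb x hx, hub x hx⟩, rfl⟩
  linarith
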